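/- Let p ≥ 0 be an integer, let c > 0, set k = 2p + 3, and let a_1 < ⋯ < a_k be distinct real numbers. For coefficients (A_1, …, A_k) ∈ ℝ^k, not all zero, define φ(x) = Σ_{j=1}^{k} A_j · K(x, a_j). Then φ is a kernel packet (i.e., a nonzero function whose support equals [a_1, a_k]) if and only if (A_1, …, A_k) is a nonzero solution to the system Σ_{j=1}^{k} A_j · a_j^l · exp(δ·c·a_j) = 0 for all l ∈ {0, …, (k−3)/2} and δ ∈ {−1, +1}. In particular, such a kernel packet of degree 2ν + 2 exists for any k distinct points. -/

import Mathlib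

/-- The polynomial factor `P_p(u) = (p! / (2p)!) ∑_{j=0}^{p} ((p+j)! / (j! (p-j)!)) (2cu)^{p-j}`
appearing in the half-integer Matérn kernel. -/
noncomputable def maternPoly (p : ℕ) (c : ℝ) (u : ℝ) : ℝ :=
  ((p.factorial : ℝ) / ((2 * p).factorial : ℝ)) *
    ∑ j ∈ Finset.range (p + 1),
      (((p + j).factorial : ℝ) / ((j.factorial : ℝ) * ((p - j).factorial : ℝ))) *
        (2 * c * u) ^ (p - j)

/-- The half-integer Matérn kernel with smoothness `ν = p + 1/2`:
`K(x, x') = P_p(|x - x'|) exp (-c |x - x'|)`. -/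
noncomputable def maternKernel (p : ℕ) (c : ℝ) (x x' : ℝ) : ℝ :=
  maternPoly p c |x - x'| * Real.exp (-(c * |x - x'|))

open Polynomial Finset Set


noncomputable def matP (p : ℕ) (c : ℝ) : ℝ[X] :=
  ∑ j ∈ Finset.range (p + 1),
    C (((p.factorial : ℝ) / ((2 * p).factorial : ℝ)) *
       (((p + j).factorial : ℝ) / ((j.factorial : ℝ) * ((p - j).factorial : ℝ))) *
       (2 * c) ^ (p - j)) * X ^ (p - j)

lemma matP_natDegree_le (p : ℕ) (c : ℝ) : (matP p c).natDegree ≤ p := by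
  refine (Polynomial.natDegree_sum_le _ _).trans ?_
  simp only [Finset.fold_max_le]
  constructor
  · omega
  · intro j hj
    refine (natDegree_C_mul_le _ _).trans ?_
    simp [Nat.sub_le]

lemma matP_coeff_p (p : ℕ) (c : ℝ) (hc : 0 < c) : (matP p c).coeff p ≠ 0 := by
  have h : (matP p c).coeff p
      = ((p.factorial : ℝ) / ((2 * p).factorial : ℝ)) *
       (((p + 0).factorial : ℝ) / ((Nat.factorial 0 : ℝ) * ((p - 0).factorial : ℝ))) *
       (2 * c) ^ (p - 0) := by
    unfold matP
    rw [finset_sum_coeff]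
    rw [Finset.sum_eq_single 0]
    · rw [coeff_C_mul, coeff_X_pow, if_pos (by omega)]; ring
    · intro j hj hj0
      simp only [coeff_C_mul, coeff_X_pow]
      rw [if_neg (by simp at hj; omega)]
      ring
    · simp
  rw [h]
  have h1 : (0:ℝ) < (p.factorial : ℝ) := by positivity
  have h2 : (0:ℝ) < ((2*p).factorial : ℝ) := by positivity
  positivity

lemma matP_eval (p : ℕ) (c : ℝ) (u : ℝ) : (matP p c).eval u = maternPoly p c u := by
  unfold matP maternPoly
  rw [eval_finset_sum, Finset.mul_sum]
  refine Finset.sum_congr rfl fun j _ => ?_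
  simp [mul_pow]
  ring


lemma rolle_chain (g : ℝ → ℝ) (hg : Continuous g) :
    ∀ (l : List ℝ) (b : ℝ), (b :: l).Chain' (· < ·) → (∀ x ∈ b :: l, g x = 0) →
    ∃ T : Finset ℝ, T.card = l.length ∧ ∀ x ∈ T, deriv g x = 0 ∧ b < x := by
  intro l
  induction l with
  | nil => intro b _ _; exact ⟨∅, by simp⟩
  | cons b' l' ih =>
    intro b hch hz
    have hbb' : b < b' := (List.isChain_cons_cons.mp hch).1
    obtain ⟨z, hzmem, hzd⟩ := exists_deriv_eq_zero hbb' hg.continuousOn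
      (by rw [hz b (by simp), hz b' (by simp)])
    obtain ⟨T', hT'card, hT'⟩ := ih b' (List.isChain_cons_cons.mp hch).2
      (fun x hx => hz x (List.mem_cons_of_mem _ hx))
    refine ⟨insert z T', ?_, ?_⟩
    · rw [Finset.card_insert_of_notMem, hT'card, List.length_cons]
      intro hzT'
      exact absurd ((hT' z hzT').2) (not_lt.mpr hzmem.2.le)
    · intro x hx
      rcases Finset.mem_insert.mp hx with h | h
      · exact h ▸ ⟨hzd, hzmem.1⟩
      · exact ⟨(hT' x h).1, hbb'.trans (hT' x h).2⟩

lemma rolle_finset (g : ℝ → ℝ) (hg : Continuous g) (S : Finset ℝ) (hS : 1 ≤ S.card)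
    (hz : ∀ x ∈ S, g x = 0) :
    ∃ T : Finset ℝ, T.card + 1 = S.card ∧ ∀ x ∈ T, deriv g x = 0 := by
  set l := S.sort (· ≤ ·) with hl
  have hsorted : l.Chain' (· < ·) := S.sortedLT_sort.isChain
  have hlen : l.length = S.card := Finset.length_sort _
  have hmem : ∀ x ∈ l, g x = 0 := fun x hx => hz x ((Finset.mem_sort _).mp hx)
  obtain ⟨b, l', hle⟩ : ∃ b l', l = b :: l' := by
    cases hl2 : l with
    | nil => rw [hl2] at hlen; simp at hlen; omega
    | cons b l' => exact ⟨b, l', rfl⟩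
  rw [hle] at hsorted hmem hlen
  obtain ⟨T, hTcard, hT⟩ := rolle_chain g hg l' b hsorted hmem
  refine ⟨T, ?_, fun x hx => (hT x hx).1⟩
  simp only [List.length_cons] at hlen
  omega
/-- card of a finset of roots of a nonzero polynomial -/
lemma card_roots_finset {P : ℝ[X]} (hP : P ≠ 0) (S : Finset ℝ) (h : ∀ x ∈ S, P.eval x = 0) :
    S.card ≤ P.natDegree := by
  calc S.card ≤ P.roots.toFinset.card := by
        apply Finset.card_le_card
        intro x hx
        rw [Multiset.mem_toFinset, mem_roots hP]
        exact h x hx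
    _ ≤ Multiset.card P.roots := P.roots.toFinset_card_le
    _ ≤ P.natDegree := P.card_roots'

noncomputable def qshift (c : ℝ) (Q : ℝ[X]) : ℝ[X] := derivative Q - C (2*c) * Q

lemma qshift_ne_zero {c : ℝ} (hc : c ≠ 0) {Q : ℝ[X]} (hQ : Q ≠ 0) : qshift c Q ≠ 0 := by
  intro h
  have h1 : (qshift c Q).coeff Q.natDegree = 0 := by rw [h]; simp
  rw [qshift, coeff_sub, coeff_C_mul, coeff_derivative,
    coeff_natDegree_succ_eq_zero] at h1
  have h2 : (2*c) * Q.coeff Q.natDegree = 0 := by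
    simp only [zero_mul, zero_sub, neg_eq_zero] at h1
    linarith
  rcases mul_eq_zero.mp h2 with h3 | h3
  · exact hc (by linarith)
  · exact hQ (leadingCoeff_eq_zero.mp h3)

lemma qshift_natDegree_le {c : ℝ} (Q : ℝ[X]) : (qshift c Q).natDegree ≤ Q.natDegree := by
  refine (natDegree_sub_le _ _).trans ?_
  simp only [sup_le_iff, max_le_iff]
  exact ⟨(natDegree_derivative_le Q).trans (Nat.sub_le _ _),
    (natDegree_C_mul_le _ _).trans le_rfl⟩

lemma expcomb_hasDerivAt (c : ℝ) (P Q : ℝ[X]) (x : ℝ) :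
    HasDerivAt (fun y => P.eval y + Real.exp (-(2*c*y)) * Q.eval y)
      ((derivative P).eval x + Real.exp (-(2*c*x)) * (qshift c Q).eval x) x := by
  have h1 : HasDerivAt (fun y : ℝ => -(2*c*y)) (-(2*c)) x := by
    simpa using ((hasDerivAt_id x).const_mul (-(2*c)))
  have h2 : HasDerivAt (fun y : ℝ => Real.exp (-(2*c*y))) (Real.exp (-(2*c*x)) * (-(2*c))) x :=
    h1.exp
  have h3 := (P.hasDerivAt x).add ((h2.mul (Q.hasDerivAt x)))
  refine h3.congr_deriv ?_
  simp [qshift]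
  ring

lemma expcomb_continuous (c : ℝ) (P Q : ℝ[X]) :
    Continuous (fun y => P.eval y + Real.exp (-(2*c*y)) * Q.eval y) := by
  fun_prop

lemma expPoly_card_le {c : ℝ} (hc : c ≠ 0) :
    ∀ (d : ℕ) (P Q : ℝ[X]), P ≠ 0 → Q ≠ 0 → P.natDegree ≤ d →
    ∀ S : Finset ℝ, (∀ x ∈ S, P.eval x + Real.exp (-(2*c*x)) * Q.eval x = 0) →
    S.card ≤ d + Q.natDegree + 1 := by
  intro d
  induction d with
  | zero =>
    intro P Q hP hQ hPd S hz
    rcases Nat.lt_or_ge S.card 1 with h | h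
    · omega
    obtain ⟨T, hTcard, hT⟩ := rolle_finset _ (expcomb_continuous c P Q) S h hz
    have hd : ∀ x ∈ T, Real.exp (-(2*c*x)) * (qshift c Q).eval x = 0 := by
      intro x hx
      have := (expcomb_hasDerivAt c P Q x).deriv ▸ hT x hx
      have hP0 : derivative P = 0 := by
        obtain ⟨a, rfl⟩ := Polynomial.natDegree_eq_zero.mp (Nat.le_zero.mp hPd)
        simp
      rw [hP0] at this
      simpa using this
    have hroots : ∀ x ∈ T, (qshift c Q).eval x = 0 := by
      intro x hx
      have := hd x hx
      have hexp : Real.exp (-(2*c*x)) ≠ 0 := Real.exp_ne_zero _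
      exact (mul_eq_zero.mp this).resolve_left hexp
    have := card_roots_finset (qshift_ne_zero hc hQ) T hroots
    have := qshift_natDegree_le (c := c) Q
    omega
  | succ d ih =>
    intro P Q hP hQ hPd S hz
    rcases Nat.lt_or_ge P.natDegree (d+1) with hlt | hge
    · have := ih P Q hP hQ (by omega) S hz
      omega
    have hPd' : P.natDegree = d + 1 := le_antisymm hPd hge
    rcases Nat.lt_or_ge S.card 1 with h | h
    · omega
    obtain ⟨T, hTcard, hT⟩ := rolle_finset _ (expcomb_continuous c P Q) S h hz
    have hP' : derivative P ≠ 0 := by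
      intro h0
      have := natDegree_eq_zero_of_derivative_eq_zero h0
      omega
    have hzT : ∀ x ∈ T, (derivative P).eval x + Real.exp (-(2*c*x)) * (qshift c Q).eval x = 0 := by
      intro x hx
      have := (expcomb_hasDerivAt c P Q x).deriv ▸ hT x hx
      exact this
    have hdeg : (derivative P).natDegree ≤ d := by
      have := natDegree_derivative_le P
      omega
    have hcard := ih (derivative P) (qshift c Q) hP' (qshift_ne_zero hc hQ) hdeg T hzT
    have := qshift_natDegree_le (c := c) Q
    omega

/-- Main zero lemma: a combination `e^{cx} P + e^{-cx} Q` with `deg ≤ p` vanishing on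
`2p+2` points is trivial.  Stated in divided form. -/
lemma expPoly_eq_zero {c : ℝ} (hc : c ≠ 0) {p : ℕ} {P Q : ℝ[X]}
    (hP : P.natDegree ≤ p) (hQ : Q.natDegree ≤ p) (S : Finset ℝ) (hS : 2*p + 2 ≤ S.card)
    (hz : ∀ x ∈ S, P.eval x + Real.exp (-(2*c*x)) * Q.eval x = 0) : P = 0 ∧ Q = 0 := by
  by_cases hP0 : P = 0
  · subst hP0
    refine ⟨rfl, ?_⟩
    by_contra hQ0
    have hroots : ∀ x ∈ S, Q.eval x = 0 := by
      intro x hx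
      have := hz x hx
      simp only [eval_zero, zero_add] at this
      exact (mul_eq_zero.mp this).resolve_left (Real.exp_ne_zero _)
    have := card_roots_finset hQ0 S hroots
    omega
  by_cases hQ0 : Q = 0
  · subst hQ0
    refine ⟨?_, rfl⟩
    by_contra hP1
    have hroots : ∀ x ∈ S, P.eval x = 0 := by
      intro x hx
      have := hz x hx
      simpa using this
    have := card_roots_finset hP1 S hroots
    omega
  · have := expPoly_card_le hc p P Q hP0 hQ0 hP S hz
    omega

lemma sum_eval_comb {ι : Type*} (s : Finset ι) (d b : ι → ℝ) (S : ℝ[X]) (p : ℕ)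
    (hS : S.natDegree ≤ p) :
    ∑ j ∈ s, d j * S.eval (b j)
      = ∑ m ∈ Finset.range (p+1), S.coeff m * ∑ j ∈ s, d j * (b j)^m := by
  have h : ∀ j, S.eval (b j) = ∑ m ∈ Finset.range (p+1), S.coeff m * (b j)^m :=
    fun j => eval_eq_sum_range' (by omega) _
  simp_rw [h, Finset.mul_sum]
  rw [Finset.sum_comm]
  exact Finset.sum_congr rfl fun m _ => Finset.sum_congr rfl fun j _ => by ring


lemma neg_moment_sum {ι : Type*} (s : Finset ι) (d b : ι → ℝ) (m : ℕ) :
    ∑ j ∈ s, d j * (-(b j))^m = (-1)^m * ∑ j ∈ s, d j * (b j)^m := by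
  rw [Finset.mul_sum]
  refine Finset.sum_congr rfl fun j _ => ?_
  rw [neg_pow]
  ring

lemma moments_iff {p : ℕ} {R : ℝ[X]} (hR1 : R.natDegree ≤ p) (hR2 : R.coeff p ≠ 0)
    {ι : Type*} (s : Finset ι) (d b : ι → ℝ) :
    (∑ j ∈ s, C (d j) * (R.comp (X - C (b j))) = 0) ↔
      (∀ l, l ≤ p → ∑ j ∈ s, d j * (b j)^l = 0) := by
  have htay : ∀ j, R.comp (X - C (b j)) = taylor (-(b j)) R := by
    intro j
    rw [taylor_apply, map_neg, sub_eq_add_neg]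
  have hcoeff : ∀ i, (∑ j ∈ s, C (d j) * (R.comp (X - C (b j)))).coeff i
      = ∑ m ∈ Finset.range (p+1), (hasseDeriv i R).coeff m *
          ∑ j ∈ s, d j * (-(b j))^m := by
    intro i
    rw [finset_sum_coeff]
    have : ∀ j ∈ s, (C (d j) * (R.comp (X - C (b j)))).coeff i
        = d j * (hasseDeriv i R).eval (-(b j)) := by
      intro j _
      rw [htay j, coeff_C_mul, taylor_coeff]
    rw [Finset.sum_congr rfl this]
    exact sum_eval_comb s d (fun j => -(b j)) (hasseDeriv i R) p
      ((natDegree_hasseDeriv_le R i).trans (by omega))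
  constructor
  · intro h l hl
    have hM : ∀ l, l ≤ p → ∑ j ∈ s, d j * (-(b j))^l = 0 := by
      intro l
      induction l using Nat.strong_induction_on with
      | _ l ih =>
        intro hl
        have h0 : (∑ j ∈ s, C (d j) * (R.comp (X - C (b j)))).coeff (p - l) = 0 := by
          rw [h]; simp
        rw [hcoeff (p - l)] at h0
        rw [Finset.sum_eq_single_of_mem l (Finset.mem_range.mpr (by omega))] at h0
        · have hc : (hasseDeriv (p - l) R).coeff l = (p.choose (p - l) : ℝ) * R.coeff p := by
            rw [hasseDeriv_coeff]
            have h1 : l + (p - l) = p := by omega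
            rw [h1]
          rw [hc] at h0
          have hch : (p.choose (p - l) : ℝ) ≠ 0 := by
            have := Nat.choose_pos (Nat.sub_le p l)
            positivity
          rcases mul_eq_zero.mp h0 with h' | h'
          · exact absurd h' (by exact mul_ne_zero hch hR2)
          · exact h'
        · intro m hm hml
          rcases Nat.lt_or_ge m l with hlt | hgt
          · rw [ih m hlt (by omega), mul_zero]
          · have : R.coeff (m + (p - l)) = 0 :=
              coeff_eq_zero_of_natDegree_lt (by omega)
            rw [hasseDeriv_coeff, this, mul_zero, zero_mul]
    have := hM l hl
    rw [neg_moment_sum] at this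
    have hne : ((-1:ℝ))^l ≠ 0 := by
      simp
    exact (mul_eq_zero.mp this).resolve_left hne
  · intro h
    ext i
    rw [hcoeff i]
    simp only [coeff_zero]
    refine Finset.sum_eq_zero fun m hm => ?_
    rw [neg_moment_sum, h m (by simp at hm; omega), mul_zero, mul_zero]

lemma comp_neg_X_facts {p : ℕ} {R : ℝ[X]} (hR1 : R.natDegree ≤ p) (hR2 : R.coeff p ≠ 0) :
    (R.comp (-X : ℝ[X])).natDegree ≤ p ∧ (R.comp (-X : ℝ[X])).coeff p ≠ 0 := by
  have hdeg : R.natDegree = p := by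
    by_contra h
    exact hR2 (coeff_eq_zero_of_natDegree_lt (by omega))
  have hX : (-X : ℝ[X]).natDegree = 1 := by simp
  have hcomp : (R.comp (-X : ℝ[X])).natDegree = p := by
    rw [natDegree_comp, hX, mul_one, hdeg]
  constructor
  · omega
  · rw [← hcomp, ← leadingCoeff]
    rw [leadingCoeff_comp (by rw [hX]; omega)]
    have hlcX : (-X : ℝ[X]).leadingCoeff = -1 := by simp
    rw [hlcX, hdeg]
    have : R.leadingCoeff ≠ 0 := by rwa [leadingCoeff, hdeg]
    exact mul_ne_zero this (pow_ne_zero _ (by norm_num))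

lemma moments_iff_mirror {p : ℕ} {R : ℝ[X]} (hR1 : R.natDegree ≤ p) (hR2 : R.coeff p ≠ 0)
    {ι : Type*} (s : Finset ι) (d b : ι → ℝ) :
    (∑ j ∈ s, C (d j) * (R.comp (C (b j) - X)) = 0) ↔
      (∀ l, l ≤ p → ∑ j ∈ s, d j * (b j)^l = 0) := by
  have hkey : ∀ j : ι, (R.comp (-X : ℝ[X])).comp (X - C (b j)) = R.comp (C (b j) - X) := by
    intro j
    rw [comp_assoc]
    rw [neg_comp, X_comp, neg_sub]
  obtain ⟨h1, h2⟩ := comp_neg_X_facts hR1 hR2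
  rw [← moments_iff h1 h2 s d b]
  constructor
  · intro h
    rw [← h]
    exact Finset.sum_congr rfl fun j _ => by rw [hkey j]
  · intro h
    rw [← h]
    exact Finset.sum_congr rfl fun j _ => by rw [hkey j]

noncomputable def evalMapFun (p : ℕ) (c : ℝ) (w : (Fin (p+1) → ℝ) × (Fin (p+1) → ℝ))
    (x : ℝ) : ℝ :=
  (∑ l, w.1 l * x^(l:ℕ)) * Real.exp (c*x) + (∑ l, w.2 l * x^(l:ℕ)) * Real.exp (-(c*x))

noncomputable def evalMapL (p : ℕ) (c : ℝ) (S : Finset ℝ) :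
    ((Fin (p+1) → ℝ) × (Fin (p+1) → ℝ)) →ₗ[ℝ] (↥S → ℝ) where
  toFun w := fun x => evalMapFun p c w x.val
  map_add' u v := by
    funext x
    simp only [evalMapFun, Prod.fst_add, Prod.snd_add, Pi.add_apply, Pi.add_def,
      Finset.sum_add_distrib, add_mul]
    ring
  map_smul' r u := by
    funext x
    simp only [evalMapFun, Prod.smul_fst, Prod.smul_snd, Pi.smul_apply, smul_eq_mul,
      RingHom.id_apply]
    simp_rw [mul_assoc]
    rw [← Finset.mul_sum, ← Finset.mul_sum]
    ring

/-- coefficient extraction for `∑ l, C (w l) * X^l` -/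
lemma finCombPoly_coeff {p : ℕ} (w : Fin (p+1) → ℝ) (l : Fin (p+1)) :
    (∑ l' : Fin (p+1), C (w l') * X^(l':ℕ)).coeff (l:ℕ) = w l := by
  rw [finset_sum_coeff]
  rw [Finset.sum_eq_single l]
  · simp
  · intro l' _ hl'
    rw [coeff_C_mul, coeff_X_pow, if_neg (fun h => hl' (Fin.ext h.symm)), mul_zero]
  · simp

lemma finCombPoly_natDegree_le {p : ℕ} (w : Fin (p+1) → ℝ) :
    (∑ l' : Fin (p+1), C (w l') * X^(l':ℕ)).natDegree ≤ p := by
  refine (Polynomial.natDegree_sum_le _ _).trans ?_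
  simp only [Finset.fold_max_le]
  refine ⟨by omega, fun l _ => ?_⟩
  refine (natDegree_C_mul_le _ _).trans ?_
  simp [Nat.lt_succ_iff.mp l.isLt]

lemma finCombPoly_eval {p : ℕ} (w : Fin (p+1) → ℝ) (x : ℝ) :
    (∑ l' : Fin (p+1), C (w l') * X^(l':ℕ)).eval x = ∑ l' : Fin (p+1), w l' * x^(l':ℕ) := by
  rw [eval_finset_sum]
  simp

lemma evalMapL_injective {p : ℕ} {c : ℝ} (hc : c ≠ 0) (S : Finset ℝ)
    (hS : S.card = 2*p+2) : Function.Injective (evalMapL p c S) := by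
  rw [injective_iff_map_eq_zero]
  intro w hw
  have hz : ∀ x ∈ S, (∑ l' : Fin (p+1), C (w.1 l') * X^(l':ℕ)).eval x
      + Real.exp (-(2*c*x)) * (∑ l' : Fin (p+1), C (w.2 l') * X^(l':ℕ)).eval x = 0 := by
    intro x hx
    have h0 : evalMapFun p c w x = 0 := congrFun hw ⟨x, hx⟩
    rw [finCombPoly_eval, finCombPoly_eval]
    have e1 : Real.exp (-(c*x)) * Real.exp (c*x) = 1 := by
      rw [← Real.exp_add]; norm_num
    have e2 : Real.exp (-(c*x)) * Real.exp (-(c*x)) = Real.exp (-(2*c*x)) := by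
      rw [← Real.exp_add]; ring_nf
    rw [evalMapFun] at h0
    linear_combination Real.exp (-(c*x)) * h0
      - (∑ l' : Fin (p+1), w.1 l' * x^(l':ℕ)) * e1
      - (∑ l' : Fin (p+1), w.2 l' * x^(l':ℕ)) * e2
  obtain ⟨hU0, hV0⟩ := expPoly_eq_zero hc (finCombPoly_natDegree_le w.1)
    (finCombPoly_natDegree_le w.2) S (by omega) hz
  have h1 : w.1 = 0 := by
    funext l
    have h := finCombPoly_coeff w.1 l
    rw [hU0, coeff_zero] at h
    simpa using h.symm
  have h2 : w.2 = 0 := by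
    funext l
    have h := finCombPoly_coeff w.2 l
    rw [hV0, coeff_zero] at h
    simpa using h.symm
  exact Prod.ext h1 h2

lemma evalMapL_surjective {p : ℕ} {c : ℝ} (hc : c ≠ 0) (S : Finset ℝ)
    (hS : S.card = 2*p+2) : Function.Surjective (evalMapL p c S) := by
  have hfr : Module.finrank ℝ ((Fin (p+1) → ℝ) × (Fin (p+1) → ℝ))
      = Module.finrank ℝ (↥S → ℝ) := by
    rw [Module.finrank_prod, Module.finrank_fintype_fun_eq_card,
      Module.finrank_fintype_fun_eq_card]
    rw [Fintype.card_coe, hS, Fintype.card_fin]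
    omega
  exact (LinearMap.injective_iff_surjective_of_finrank_eq_finrank hfr).mp
    (evalMapL_injective hc S hS)

lemma pairing_helper {p : ℕ} (s : Finset ℝ) (d : ℝ → ℝ) (w : Fin (p+1) → ℝ) (e : ℝ → ℝ) :
    ∑ x ∈ s, d x * ((∑ l, w l * x^(l:ℕ)) * e x)
      = ∑ l : Fin (p+1), w l * ∑ x ∈ s, d x * x^(l:ℕ) * e x := by
  simp_rw [Finset.sum_mul, Finset.mul_sum]
  rw [Finset.sum_comm]
  refine Finset.sum_congr rfl fun l _ => ?_
  refine Finset.sum_congr rfl fun x _ => by ring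

lemma coll {p : ℕ} {c : ℝ} (hc : c ≠ 0) (S : Finset ℝ) (hS : S.card ≤ 2*p+2)
    (d : ℝ → ℝ)
    (h1 : ∀ l ≤ p, ∑ x ∈ S, d x * x^l * Real.exp (c*x) = 0)
    (h2 : ∀ l ≤ p, ∑ x ∈ S, d x * x^l * Real.exp (-(c*x)) = 0) :
    ∀ x ∈ S, d x = 0 := by
  obtain ⟨S', hSS', hS'⟩ := Infinite.exists_superset_card_eq S (2*p+2) hS
  set d' : ℝ → ℝ := fun y => if y ∈ S then d y else 0 with hd'
  have hsum : ∀ g : ℝ → ℝ, ∑ x ∈ S', d' x * g x = ∑ x ∈ S, d x * g x := by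
    intro g
    rw [← Finset.sum_subset hSS' (fun x _ hx => by simp [hd', hx])]
    exact Finset.sum_congr rfl fun x hx => by simp [hd', hx]
  intro x0 hx0
  obtain ⟨w, hw⟩ := evalMapL_surjective hc S' hS'
    (fun y => if (y:ℝ) = x0 then 1 else 0)
  have hval : ∀ x (hx : x ∈ S'), evalMapFun p c w x = if x = x0 then 1 else 0 :=
    fun x hx => congrFun hw ⟨x, hx⟩
  have key1 : ∑ x ∈ S', d' x * evalMapFun p c w x = d' x0 := by
    rw [Finset.sum_congr rfl (fun x hx => by rw [hval x hx])]
    simp_rw [mul_ite, mul_one, mul_zero]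
    rw [Finset.sum_ite_eq' S' x0 d']
    exact if_pos (hSS' hx0)
  have key2 : ∑ x ∈ S', d' x * evalMapFun p c w x = 0 := by
    simp_rw [evalMapFun, mul_add, Finset.sum_add_distrib]
    rw [pairing_helper S' d' w.1 (fun x => Real.exp (c*x)),
      pairing_helper S' d' w.2 (fun x => Real.exp (-(c*x)))]
    have z1 : ∀ l : Fin (p+1), ∑ x ∈ S', d' x * x^(l:ℕ) * Real.exp (c*x) = 0 := by
      intro l
      have := hsum (fun x => x^(l:ℕ) * Real.exp (c*x))
      simp_rw [← mul_assoc] at this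
      rw [this]
      exact h1 l (by omega)
    have z2 : ∀ l : Fin (p+1), ∑ x ∈ S', d' x * x^(l:ℕ) * Real.exp (-(c*x)) = 0 := by
      intro l
      have := hsum (fun x => x^(l:ℕ) * Real.exp (-(c*x)))
      simp_rw [← mul_assoc] at this
      rw [this]
      exact h2 l (by omega)
    simp_rw [fun l : Fin (p+1) => z1 l, fun l : Fin (p+1) => z2 l]
    simp
  have h : d' x0 = 0 := by rw [← key1, key2]
  simpa [hd', hx0] using h


section Rep

variable {p : ℕ} {c : ℝ}

lemma matern_eval_ge (p : ℕ) (c : ℝ) (x x' : ℝ) (h : x' ≤ x) :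
    maternKernel p c x x'
      = ((matP p c).comp (X - C x')).eval x * Real.exp (c * x') * Real.exp (-(c*x)) := by
  rw [maternKernel, abs_of_nonneg (sub_nonneg.mpr h), ← matP_eval, eval_comp]
  simp only [eval_sub, eval_X, eval_C]
  have h2 : -(c * (x - x')) = c * x' + -(c*x) := by ring
  rw [h2, Real.exp_add]
  ring

lemma matern_eval_le (p : ℕ) (c : ℝ) (x x' : ℝ) (h : x ≤ x') :
    maternKernel p c x x'
      = ((matP p c).comp (C x' - X)).eval x * Real.exp (-(c * x')) * Real.exp (c*x) := by
  rw [maternKernel, abs_of_nonpos (sub_nonpos.mpr h), neg_sub, ← matP_eval, eval_comp]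
  simp only [eval_sub, eval_X, eval_C]
  have h2 : -(c * (x' - x)) = -(c * x') + c*x := by ring
  rw [h2, Real.exp_add]
  ring

/-- Left polynomial part of `φ` on a gap with `t` points on the left. -/
noncomputable def Gpoly (p : ℕ) (c : ℝ) {k : ℕ} (a A : Fin k → ℝ) (t : ℕ) : ℝ[X] :=
  ∑ j ∈ Finset.univ.filter (fun j : Fin k => (j:ℕ) < t),
    C (A j * Real.exp (c * a j)) * (matP p c).comp (X - C (a j))

noncomputable def Hpoly (p : ℕ) (c : ℝ) {k : ℕ} (a A : Fin k → ℝ) (t : ℕ) : ℝ[X] :=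
  ∑ j ∈ Finset.univ.filter (fun j : Fin k => t ≤ (j:ℕ)),
    C (A j * Real.exp (-(c * a j))) * (matP p c).comp (C (a j) - X)

lemma Gpoly_natDegree_le (p : ℕ) (c : ℝ) {k : ℕ} (a A : Fin k → ℝ) (t : ℕ) :
    (Gpoly p c a A t).natDegree ≤ p := by
  refine (Polynomial.natDegree_sum_le _ _).trans ?_
  simp only [Finset.fold_max_le]
  refine ⟨by omega, fun j _ => ?_⟩
  refine (natDegree_C_mul_le _ _).trans ?_
  rw [natDegree_comp, natDegree_X_sub_C, mul_one]
  exact matP_natDegree_le p c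

lemma Hpoly_natDegree_le (p : ℕ) (c : ℝ) {k : ℕ} (a A : Fin k → ℝ) (t : ℕ) :
    (Hpoly p c a A t).natDegree ≤ p := by
  refine (Polynomial.natDegree_sum_le _ _).trans ?_
  simp only [Finset.fold_max_le]
  refine ⟨by omega, fun j _ => ?_⟩
  refine (natDegree_C_mul_le _ _).trans ?_
  have h : (C (a j) - X : ℝ[X]) = -(X - C (a j)) := by ring
  rw [h, natDegree_comp, natDegree_neg, natDegree_X_sub_C, mul_one]
  exact matP_natDegree_le p c

lemma phi_rep (p : ℕ) (c : ℝ) {k : ℕ} (a A : Fin k → ℝ) (t : ℕ) (x : ℝ)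
    (hle : ∀ j : Fin k, (j:ℕ) < t → a j ≤ x) (hge : ∀ j : Fin k, t ≤ (j:ℕ) → x ≤ a j) :
    ∑ j, A j * maternKernel p c x (a j)
      = (Gpoly p c a A t).eval x * Real.exp (-(c*x))
        + (Hpoly p c a A t).eval x * Real.exp (c*x) := by
  rw [Gpoly, Hpoly, eval_finset_sum, eval_finset_sum, Finset.sum_mul, Finset.sum_mul]
  rw [← Finset.sum_filter_add_sum_filter_not Finset.univ (fun j : Fin k => (j:ℕ) < t)
    (fun j => A j * maternKernel p c x (a j))]
  congr 1
  · refine Finset.sum_congr rfl fun j hj => ?_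
    rw [matern_eval_ge p c x (a j) (hle j (Finset.mem_filter.mp hj).2)]
    simp only [eval_mul, eval_C]
    ring
  · have hfil : Finset.univ.filter (fun j : Fin k => ¬ (j:ℕ) < t)
        = Finset.univ.filter (fun j : Fin k => t ≤ (j:ℕ)) := by
      ext j; simp [not_lt]
    rw [hfil]
    refine Finset.sum_congr rfl fun j hj => ?_
    rw [matern_eval_le p c x (a j) (hge j (Finset.mem_filter.mp hj).2)]
    simp only [eval_mul, eval_C]
    ring

end Rep

section Core

variable {p : ℕ} {c : ℝ}

lemma vanish_interval (hc : 0 < c) {k : ℕ} (a A : Fin k → ℝ)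
    (t : ℕ) (u v : ℝ) (huv : u < v)
    (hle : ∀ j : Fin k, (j:ℕ) < t → a j ≤ u) (hge : ∀ j : Fin k, t ≤ (j:ℕ) → v ≤ a j)
    (hvan : ∀ x ∈ Set.Ioo u v, ∑ j, A j * maternKernel p c x (a j) = 0) :
    Gpoly p c a A t = 0 ∧ Hpoly p c a A t = 0 := by
  obtain ⟨S, hSsub, hScard⟩ := (Set.Ioo_infinite huv).exists_subset_card_eq (2*p+2)
  have hz : ∀ x ∈ S, (Hpoly p c a A t).eval x
      + Real.exp (-(2*c*x)) * (Gpoly p c a A t).eval x = 0 := by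
    intro x hx
    have hxI : x ∈ Set.Ioo u v := hSsub hx
    have h0 := hvan x hxI
    rw [phi_rep p c a A t x (fun j hj => (hle j hj).trans hxI.1.le)
      (fun j hj => hxI.2.le.trans (hge j hj))] at h0
    have e1 : Real.exp (-(c*x)) * Real.exp (c*x) = 1 := by rw [← Real.exp_add]; norm_num
    have e2 : Real.exp (-(c*x)) * Real.exp (-(c*x)) = Real.exp (-(2*c*x)) := by
      rw [← Real.exp_add]; ring_nf
    linear_combination Real.exp (-(c*x)) * h0 - (Hpoly p c a A t).eval x * e1
      - (Gpoly p c a A t).eval x * e2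
  have h := expPoly_eq_zero (ne_of_gt hc) (Hpoly_natDegree_le p c a A t)
    (Gpoly_natDegree_le p c a A t) S (by omega) hz
  exact ⟨h.2, h.1⟩

lemma vanish_interval_moments (hc : 0 < c) {k : ℕ} (a A : Fin k → ℝ)
    (t : ℕ) (u v : ℝ) (huv : u < v)
    (hle : ∀ j : Fin k, (j:ℕ) < t → a j ≤ u) (hge : ∀ j : Fin k, t ≤ (j:ℕ) → v ≤ a j)
    (hvan : ∀ x ∈ Set.Ioo u v, ∑ j, A j * maternKernel p c x (a j) = 0) :
    (∀ l ≤ p, ∑ j ∈ Finset.univ.filter (fun j : Fin k => (j:ℕ) < t),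
        (A j * Real.exp (c * a j)) * a j ^ l = 0) ∧
    (∀ l ≤ p, ∑ j ∈ Finset.univ.filter (fun j : Fin k => t ≤ (j:ℕ)),
        (A j * Real.exp (-(c * a j))) * a j ^ l = 0) := by
  obtain ⟨hG, hH⟩ := vanish_interval hc a A t u v huv hle hge hvan
  constructor
  · exact fun l hl => (moments_iff (matP_natDegree_le p c) (matP_coeff_p p c hc)
      (Finset.univ.filter (fun j : Fin k => (j:ℕ) < t))
      (fun j => A j * Real.exp (c * a j)) a).mp hG l hl
  · exact fun l hl => (moments_iff_mirror (matP_natDegree_le p c) (matP_coeff_p p c hc)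
      (Finset.univ.filter (fun j : Fin k => t ≤ (j:ℕ)))
      (fun j => A j * Real.exp (-(c * a j))) a).mp hH l hl

lemma coll_fin (hc : 0 < c) {k : ℕ} (a A : Fin k → ℝ) (ha : StrictMono a)
    (s : Finset (Fin k)) (hcard : s.card ≤ 2*p+2)
    (hpos : ∀ l ≤ p, ∑ j ∈ s, A j * a j ^ l * Real.exp (c * a j) = 0)
    (hneg : ∀ l ≤ p, ∑ j ∈ s, A j * a j ^ l * Real.exp (-(c * a j)) = 0) :
    ∀ j ∈ s, A j = 0 := by
  set d : ℝ → ℝ := fun y => ∑ j ∈ Finset.univ.filter (fun j : Fin k => a j = y), A j with hd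
  have hda : ∀ j : Fin k, d (a j) = A j := by
    intro j
    rw [hd]
    have h : Finset.univ.filter (fun j' : Fin k => a j' = a j) = {j} := by
      ext j'; simp [ha.injective.eq_iff]
    simp only [h, Finset.sum_singleton]
  have hsum : ∀ g : ℝ → ℝ, ∑ x ∈ s.image a, d x * g x = ∑ j ∈ s, A j * g (a j) := by
    intro g
    rw [Finset.sum_image (fun x hx y hy h => ha.injective h)]
    exact Finset.sum_congr rfl fun j _ => by rw [hda j]
  have h1 : ∀ l ≤ p, ∑ x ∈ s.image a, d x * x^l * Real.exp (c*x) = 0 := by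
    intro l hl
    have h := hsum (fun y => y^l * Real.exp (c*y))
    simp_rw [← mul_assoc] at h
    rw [h]
    exact hpos l hl
  have h2 : ∀ l ≤ p, ∑ x ∈ s.image a, d x * x^l * Real.exp (-(c*x)) = 0 := by
    intro l hl
    have h := hsum (fun y => y^l * Real.exp (-(c*y)))
    simp_rw [← mul_assoc] at h
    rw [h]
    exact hneg l hl
  have hcoll := coll (ne_of_gt hc) (s.image a) ((Finset.card_image_le).trans hcard) d h1 h2
  intro j hj
  rw [← hda j]
  exact hcoll (a j) (Finset.mem_image_of_mem a hj)

lemma card_filter_lt_le (k t : ℕ) :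
    (Finset.univ.filter (fun j : Fin k => (j:ℕ) < t)).card ≤ t := by
  calc (Finset.univ.filter (fun j : Fin k => (j:ℕ) < t)).card
      ≤ (Finset.range t).card := Finset.card_le_card_of_injOn (fun j => (j:ℕ))
        (fun j hj => Finset.mem_range.mpr (Finset.mem_filter.mp hj).2)
        (fun x _ y _ h => Fin.ext h)
    _ = t := Finset.card_range t

lemma card_filter_ge_le (k t : ℕ) :
    (Finset.univ.filter (fun j : Fin k => t ≤ (j:ℕ))).card ≤ k - t := by
  calc (Finset.univ.filter (fun j : Fin k => t ≤ (j:ℕ))).card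
      ≤ (Finset.range (k - t)).card := Finset.card_le_card_of_injOn (fun j => (j:ℕ) - t)
        (fun j hj => Finset.mem_range.mpr (by
          show (j:ℕ) - t < k - t
          have h1 := (Finset.mem_filter.mp hj).2
          have h2 := j.isLt
          omega))
        (fun x hx y hy h => Fin.ext (by
          have h1 := (Finset.mem_filter.mp (Finset.mem_coe.mp hx)).2
          have h2 := (Finset.mem_filter.mp (Finset.mem_coe.mp hy)).2
          have h3 : (x:ℕ) - t = (y:ℕ) - t := h
          omega))
    _ = k - t := Finset.card_range _

lemma no_vanish (hc : 0 < c) (a A : Fin (2*p+3) → ℝ) (ha : StrictMono a)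
    (hcond : ∀ l ≤ p, ∀ δ : ℝ, (δ = 1 ∨ δ = -1) →
      ∑ j, A j * a j ^ l * Real.exp (δ * c * a j) = 0)
    (t : ℕ) (ht1 : 1 ≤ t) (ht2 : t ≤ 2*p+2) (u v : ℝ) (huv : u < v)
    (hle : ∀ j : Fin (2*p+3), (j:ℕ) < t → a j ≤ u)
    (hge : ∀ j : Fin (2*p+3), t ≤ (j:ℕ) → v ≤ a j)
    (hvan : ∀ x ∈ Set.Ioo u v, ∑ j, A j * maternKernel p c x (a j) = 0) :
    A = 0 := by
  obtain ⟨hL, hR⟩ := vanish_interval_moments hc a A t u v huv hle hge hvan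
  have hgpos : ∀ l ≤ p, ∑ j, A j * a j ^ l * Real.exp (c * a j) = 0 := by
    intro l hl
    have h := hcond l hl 1 (Or.inl rfl)
    simpa using h
  have hgneg : ∀ l ≤ p, ∑ j, A j * a j ^ l * Real.exp (-(c * a j)) = 0 := by
    intro l hl
    have h := hcond l hl (-1) (Or.inr rfl)
    simpa [neg_one_mul, neg_mul] using h
  set sL := Finset.univ.filter (fun j : Fin (2*p+3) => (j:ℕ) < t) with hsL
  set sR := Finset.univ.filter (fun j : Fin (2*p+3) => t ≤ (j:ℕ)) with hsR
  have hLpos : ∀ l ≤ p, ∑ j ∈ sL, A j * a j ^ l * Real.exp (c * a j) = 0 := by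
    intro l hl
    rw [← hL l hl]
    exact Finset.sum_congr rfl fun j _ => by ring
  have hRneg : ∀ l ≤ p, ∑ j ∈ sR, A j * a j ^ l * Real.exp (-(c * a j)) = 0 := by
    intro l hl
    rw [← hR l hl]
    exact Finset.sum_congr rfl fun j _ => by ring
  have hsplit : ∀ f : Fin (2*p+3) → ℝ, ∑ j ∈ sL, f j + ∑ j ∈ sR, f j = ∑ j, f j := by
    intro f
    rw [hsL, hsR, ← Finset.sum_filter_add_sum_filter_not Finset.univ
      (fun j : Fin (2*p+3) => (j:ℕ) < t) f]
    congr 1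
    apply Finset.sum_congr _ (fun _ _ => rfl)
    ext j; simp [not_lt]
  have hLneg : ∀ l ≤ p, ∑ j ∈ sL, A j * a j ^ l * Real.exp (-(c * a j)) = 0 := by
    intro l hl
    have h := hsplit (fun j => A j * a j ^ l * Real.exp (-(c * a j)))
    rw [hRneg l hl, hgneg l hl, add_zero] at h
    exact h
  have hRpos : ∀ l ≤ p, ∑ j ∈ sR, A j * a j ^ l * Real.exp (c * a j) = 0 := by
    intro l hl
    have h := hsplit (fun j => A j * a j ^ l * Real.exp (c * a j))
    rw [hLpos l hl, hgpos l hl, zero_add] at h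
    exact h
  have hA_L : ∀ j ∈ sL, A j = 0 :=
    coll_fin hc a A ha sL ((card_filter_lt_le _ t).trans (by omega)) hLpos hLneg
  have hA_R : ∀ j ∈ sR, A j = 0 :=
    coll_fin hc a A ha sR ((card_filter_ge_le _ t).trans (by omega)) hRpos hRneg
  funext j
  show A j = 0
  rcases Nat.lt_or_ge (j:ℕ) t with h | h
  · exact hA_L j (by simp [hsL, h])
  · exact hA_R j (by simp [hsR, h])

end Core

section Main

variable {p : ℕ} {c : ℝ}

lemma filter_lt_zero_empty (k : ℕ) :
    Finset.univ.filter (fun j : Fin k => (j:ℕ) < 0) = ∅ := by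
  ext j; simp

lemma filter_ge_top_empty (k : ℕ) :
    Finset.univ.filter (fun j : Fin k => k ≤ (j:ℕ)) = ∅ := by
  ext j
  simp only [Finset.mem_filter, Finset.mem_univ, true_and, Finset.notMem_empty, iff_false]
  have := j.isLt; omega

lemma filter_ge_zero_univ (k : ℕ) :
    Finset.univ.filter (fun j : Fin k => 0 ≤ (j:ℕ)) = Finset.univ := by
  ext j; simp

lemma filter_lt_top_univ (k : ℕ) :
    Finset.univ.filter (fun j : Fin k => (j:ℕ) < k) = Finset.univ := by
  ext j; simp [j.isLt]

lemma kp_main (hc : 0 < c) (a : Fin (2*p+3) → ℝ) (ha : StrictMono a)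
    (A : Fin (2*p+3) → ℝ) (hA0 : A ≠ 0) (φ : ℝ → ℝ)
    (hφ : ∀ x, φ x = ∑ j, A j * maternKernel p c x (a j)) :
    (φ ≠ 0 ∧ closure {x : ℝ | φ x ≠ 0}
        = Set.Icc (a ⟨0, by positivity⟩) (a ⟨2*p+2, Nat.lt_succ_self _⟩)) ↔
    (∀ l ≤ p, ∀ δ : ℝ, (δ = 1 ∨ δ = -1) →
      ∑ j, A j * a j ^ l * Real.exp (δ * c * a j) = 0) := by
  have hG0 : Gpoly p c a A 0 = 0 := by
    rw [Gpoly, filter_lt_zero_empty, Finset.sum_empty]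
  have hHK : Hpoly p c a A (2*p+3) = 0 := by
    rw [Hpoly, filter_ge_top_empty, Finset.sum_empty]
  have hrepL : ∀ x, x ≤ a ⟨0, by positivity⟩ →
      φ x = (Hpoly p c a A 0).eval x * Real.exp (c*x) := by
    intro x hx
    rw [hφ x, phi_rep p c a A 0 x (fun j hj => absurd hj (by omega))
      (fun j _ => hx.trans (ha.monotone (by rw [Fin.le_def]; exact Nat.zero_le _)))]
    rw [hG0, eval_zero, zero_mul, zero_add]
  have hrepR : ∀ x, a ⟨2*p+2, Nat.lt_succ_self _⟩ ≤ x →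
      φ x = (Gpoly p c a A (2*p+3)).eval x * Real.exp (-(c*x)) := by
    intro x hx
    rw [hφ x, phi_rep p c a A (2*p+3) x
      (fun j hj => le_trans (ha.monotone (by
        rw [Fin.le_def]; show (j:ℕ) ≤ 2*p+2; have := j.isLt; omega)) hx)
      (fun j hj => absurd hj (by have := j.isLt; omega))]
    rw [hHK, eval_zero, zero_mul, add_zero]
  constructor
  · rintro ⟨hφ0, hcl⟩
    have hout : ∀ x, x ∉ Set.Icc (a ⟨0, by positivity⟩) (a ⟨2*p+2, Nat.lt_succ_self _⟩) → φ x = 0 := by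
      intro x hx
      by_contra h
      exact hx (hcl ▸ subset_closure h)
    have hGright : Gpoly p c a A (2*p+3) = 0 := by
      apply Polynomial.eq_zero_of_infinite_isRoot
      apply (Set.Ioi_infinite (a ⟨2*p+2, Nat.lt_succ_self _⟩)).mono
      intro x hx
      have h0 : φ x = 0 := by
        apply hout
        rw [Set.mem_Icc]
        push_neg
        intro _
        exact hx
      rw [hrepR x (le_of_lt hx)] at h0
      have := (mul_eq_zero.mp h0).resolve_right (Real.exp_ne_zero _)
      exact this
    have hHleft : Hpoly p c a A 0 = 0 := by
      apply Polynomial.eq_zero_of_infinite_isRoot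
      apply (Set.Iio_infinite (a ⟨0, by positivity⟩)).mono
      intro x hx
      have h0 : φ x = 0 := by
        apply hout
        rw [Set.mem_Icc]
        push_neg
        intro h'
        exact absurd h' (not_le.mpr hx)
      rw [hrepL x (le_of_lt hx)] at h0
      exact (mul_eq_zero.mp h0).resolve_right (Real.exp_ne_zero _)
    have hpos := (moments_iff (matP_natDegree_le p c) (matP_coeff_p p c hc)
      (Finset.univ.filter (fun j : Fin (2*p+3) => (j:ℕ) < 2*p+3))
      (fun j => A j * Real.exp (c * a j)) a).mp hGright
    have hneg := (moments_iff_mirror (matP_natDegree_le p c) (matP_coeff_p p c hc)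
      (Finset.univ.filter (fun j : Fin (2*p+3) => 0 ≤ (j:ℕ)))
      (fun j => A j * Real.exp (-(c * a j))) a).mp hHleft
    intro l hl δ hδ
    rcases hδ with rfl | rfl
    · have h := hpos l hl
      rw [filter_lt_top_univ] at h
      rw [← h]
      refine Finset.sum_congr rfl fun j _ => ?_
      rw [one_mul]; ring
    · have h := hneg l hl
      rw [filter_ge_zero_univ] at h
      rw [← h]
      refine Finset.sum_congr rfl fun j _ => ?_
      rw [show (-1:ℝ) * c * a j = -(c * a j) by ring]; ring
  · intro hcond
    have hgpos : ∀ l ≤ p, ∑ j, (A j * Real.exp (c * a j)) * a j ^ l = 0 := by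
      intro l hl
      have h := hcond l hl 1 (Or.inl rfl)
      rw [← h]
      refine Finset.sum_congr rfl fun j _ => by rw [one_mul]; ring
    have hgneg : ∀ l ≤ p, ∑ j, (A j * Real.exp (-(c * a j))) * a j ^ l = 0 := by
      intro l hl
      have h := hcond l hl (-1) (Or.inr rfl)
      rw [← h]
      refine Finset.sum_congr rfl fun j _ => by
        rw [show (-1:ℝ) * c * a j = -(c * a j) by ring]; ring
    have hGK : Gpoly p c a A (2*p+3) = 0 := by
      apply (moments_iff (matP_natDegree_le p c) (matP_coeff_p p c hc)
        (Finset.univ.filter (fun j : Fin (2*p+3) => (j:ℕ) < 2*p+3))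
        (fun j => A j * Real.exp (c * a j)) a).mpr
      intro l hl
      rw [filter_lt_top_univ]
      exact hgpos l hl
    have hH0 : Hpoly p c a A 0 = 0 := by
      apply (moments_iff_mirror (matP_natDegree_le p c) (matP_coeff_p p c hc)
        (Finset.univ.filter (fun j : Fin (2*p+3) => 0 ≤ (j:ℕ)))
        (fun j => A j * Real.exp (-(c * a j))) a).mpr
      intro l hl
      rw [filter_ge_zero_univ]
      exact hgneg l hl
    have hzL : ∀ x, x ≤ a ⟨0, by positivity⟩ → φ x = 0 := by
      intro x hx
      rw [hrepL x hx, hH0, eval_zero, zero_mul]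
    have hzR : ∀ x, a ⟨2*p+2, Nat.lt_succ_self _⟩ ≤ x → φ x = 0 := by
      intro x hx
      rw [hrepR x hx, hGK, eval_zero, zero_mul]
    have hphne : φ ≠ 0 := by
      intro h0
      apply hA0
      refine no_vanish hc a A ha hcond 1 le_rfl (by omega) (a ⟨0, by positivity⟩)
        (a ⟨1, by omega⟩) (ha (by rw [Fin.lt_def]; show 0 < 1; omega)) ?_ ?_ ?_
      · intro j hj
        exact ha.monotone (by rw [Fin.le_def]; show (j:ℕ) ≤ 0; omega)
      · intro j hj
        exact ha.monotone (by rw [Fin.le_def]; exact hj)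
      · intro x _
        exact (hφ x).symm.trans (congrFun h0 x)
    have hsub : closure {x : ℝ | φ x ≠ 0}
        ⊆ Set.Icc (a ⟨0, by positivity⟩) (a ⟨2*p+2, Nat.lt_succ_self _⟩) := by
      refine closure_minimal ?_ isClosed_Icc
      intro x hx
      by_contra hxI
      apply hx
      rw [Set.mem_Icc] at hxI
      push_neg at hxI
      rcases lt_or_ge x (a ⟨0, by positivity⟩) with h | h
      · exact hzL x h.le
      · exact hzR x (hxI h).le
    have hsup : Set.Icc (a ⟨0, by positivity⟩) (a ⟨2*p+2, Nat.lt_succ_self _⟩)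
        ⊆ closure {x : ℝ | φ x ≠ 0} := by
      intro x0 hx0
      rw [mem_closure_iff]
      intro O hO hx0O
      by_contra hne
      have hOz : ∀ y ∈ O, φ y = 0 := by
        intro y hy
        by_contra h
        exact hne ⟨y, hy, h⟩
      obtain ⟨ε, hε, hball⟩ := Metric.isOpen_iff.mp hO x0 hx0O
      have hball' : Set.Ioo (x0 - ε) (x0 + ε) ⊆ O := by
        rw [← Real.ball_eq_Ioo]; exact hball
      rcases lt_or_eq_of_le hx0.2 with hlt | heq
      · set T := Finset.univ.filter (fun j : Fin (2*p+3) => x0 < a j) with hT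
        have hTne : T.Nonempty := ⟨⟨2*p+2, Nat.lt_succ_self _⟩, by simp [hT, hlt]⟩
        set t := T.min' hTne with ht
        have htmem : t ∈ T := T.min'_mem hTne
        have hx0t : x0 < a t := by
          have := Finset.mem_filter.mp htmem
          exact this.2
        have ht1 : 1 ≤ (t:ℕ) := by
          by_contra h
          have h0 : t = ⟨0, by positivity⟩ := Fin.ext (by show (t:ℕ) = 0; omega)
          rw [h0] at hx0t
          linarith [hx0.1]
        apply hA0
        refine no_vanish hc a A ha hcond (t:ℕ) ht1 (by have := t.isLt; omega)
          x0 (min (a t) (x0 + ε)) (lt_min hx0t (by linarith)) ?_ ?_ ?_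
        · intro j hj
          by_contra h
          push_neg at h
          have hjT : j ∈ T := by simp [hT, h]
          have := T.min'_le j hjT
          rw [← ht, Fin.le_def] at this
          omega
        · intro j hj
          refine (min_le_left _ _).trans (ha.monotone ?_)
          rw [Fin.le_def]; omega
        · intro x hx
          refine (hφ x).symm.trans (hOz x (hball' ⟨?_, ?_⟩))
          · have := hx.1; linarith
          · exact lt_of_lt_of_le hx.2 (min_le_right _ _)
      · have hpen : a ⟨2*p+1, by omega⟩ < a ⟨2*p+2, Nat.lt_succ_self _⟩ :=
          ha (by rw [Fin.lt_def]; show 2*p+1 < 2*p+2; omega)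
        apply hA0
        refine no_vanish hc a A ha hcond (2*p+2) (by omega) le_rfl
          (max (a ⟨2*p+1, by omega⟩) (x0 - ε)) x0
          (max_lt (heq ▸ hpen) (by linarith)) ?_ ?_ ?_
        · intro j hj
          refine le_trans (ha.monotone ?_) (le_max_left _ _)
          rw [Fin.le_def]
          show (j:ℕ) ≤ 2*p+1
          omega
        · intro j hj
          have hj' : j = ⟨2*p+2, Nat.lt_succ_self _⟩ := Fin.ext (by
            show (j:ℕ) = 2*p+2; have := j.isLt; omega)
          rw [hj', ← heq]
        · intro x hx
          refine (hφ x).symm.trans (hOz x (hball' ⟨?_, ?_⟩))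
          · exact lt_of_le_of_lt (le_trans (by linarith) (le_max_right
              (a ⟨2*p+1, by omega⟩) (x0 - ε))) hx.1
          · have := hx.2; linarith
    exact ⟨hphne, subset_antisymm hsub hsup⟩

end Main

section Exist

noncomputable def momentMap (p : ℕ) (c : ℝ) {k : ℕ} (a : Fin k → ℝ) :
    (Fin k → ℝ) →ₗ[ℝ] ((Fin (p+1) → ℝ) × (Fin (p+1) → ℝ)) where
  toFun A := (fun l => ∑ j, A j * (a j ^ (l:ℕ) * Real.exp (c * a j)),
              fun l => ∑ j, A j * (a j ^ (l:ℕ) * Real.exp (-(c * a j))))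
  map_add' u v := by
    refine Prod.ext ?_ ?_ <;> funext l <;>
      simp [add_mul, Finset.sum_add_distrib]
  map_smul' r u := by
    refine Prod.ext ?_ ?_ <;> funext l <;>
      simp [Finset.mul_sum, mul_assoc]

lemma exists_kernel_vec (p : ℕ) (c : ℝ) (a : Fin (2*p+3) → ℝ) :
    ∃ B : Fin (2*p+3) → ℝ, B ≠ 0 ∧ momentMap p c a B = 0 := by
  have hni : ¬ Function.Injective (momentMap p c a) := by
    intro hinj
    have h := LinearMap.finrank_le_finrank_of_injective hinj
    simp only [Module.finrank_fintype_fun_eq_card, Module.finrank_prod,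
      Fintype.card_fin] at h
    omega
  rw [Function.not_injective_iff] at hni
  obtain ⟨x, y, hxy, hne⟩ := hni
  exact ⟨x - y, sub_ne_zero.mpr hne, by rw [map_sub, hxy, sub_self]⟩

lemma momentMap_zero_cond (p : ℕ) (c : ℝ) {k : ℕ} (a : Fin k → ℝ)
    (B : Fin k → ℝ) (hB0 : momentMap p c a B = 0) :
    ∀ l ≤ p, ∀ δ : ℝ, (δ = 1 ∨ δ = -1) →
      ∑ j, B j * a j ^ l * Real.exp (δ * c * a j) = 0 := by
  intro l hl δ hδ
  have h1 : ∑ j, B j * (a j ^ l * Real.exp (c * a j)) = 0 := by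
    have h := congrFun (congrArg Prod.fst hB0) ⟨l, by omega⟩
    simpa [momentMap] using h
  have h2 : ∑ j, B j * (a j ^ l * Real.exp (-(c * a j))) = 0 := by
    have h := congrFun (congrArg Prod.snd hB0) ⟨l, by omega⟩
    simpa [momentMap] using h
  rcases hδ with rfl | rfl
  · rw [← h1]
    refine Finset.sum_congr rfl fun j _ => by rw [one_mul]; ring
  · rw [← h2]
    refine Finset.sum_congr rfl fun j _ => by
      rw [show (-1:ℝ) * c * a j = -(c * a j) by ring]; ring

end Exist


/-- Let `p ≥ 0`, `c > 0`, `k = 2p+3`, `a_1 < ⋯ < a_k`, and let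
`A ∈ ℝ^k` be nonzero, `φ(x) = ∑_j A_j K(x, a_j)`. Then `φ` is a kernel packet
(a nonzero function with support exactly `[a_1, a_k]`) if and only if `A` solves the
system `∑_j A_j a_j^l exp(δ c a_j) = 0` (`l = 0, …, p`, `δ = ±1`). In particular, a
kernel packet of degree `k = 2ν + 2` exists on any such set of points. -/
theorem kernel_packet_iff_system_and_existence
    (p : ℕ) (c : ℝ) (hc : 0 < c)
    (a : Fin (2 * p + 3) → ℝ) (ha : StrictMono a)
    (A : Fin (2 * p + 3) → ℝ) (hA0 : A ≠ 0)
    (φ : ℝ → ℝ) (hφ : ∀ x, φ x = ∑ j, A j * maternKernel p c x (a j)) :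
    ((φ ≠ 0 ∧ closure {x : ℝ | φ x ≠ 0} =
        Set.Icc (a ⟨0, by omega⟩) (a ⟨2 * p + 2, by omega⟩)) ↔
      (∀ l ≤ p, ∀ δ : ℝ, (δ = 1 ∨ δ = -1) →
        ∑ j, A j * a j ^ l * Real.exp (δ * c * a j) = 0)) ∧
    (∃ B : Fin (2 * p + 3) → ℝ, B ≠ 0 ∧
      (∀ l ≤ p, ∀ δ : ℝ, (δ = 1 ∨ δ = -1) →
        ∑ j, B j * a j ^ l * Real.exp (δ * c * a j) = 0) ∧
      (fun x : ℝ => ∑ j, B j * maternKernel p c x (a j)) ≠ 0 ∧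
      closure {x : ℝ | (∑ j, B j * maternKernel p c x (a j)) ≠ 0} =
        Set.Icc (a ⟨0, by omega⟩) (a ⟨2 * p + 2, by omega⟩)) := by
  constructor
  · exact kp_main hc a ha A hA0 φ hφ
  · obtain ⟨B, hB0, hBker⟩ := exists_kernel_vec p c a
    have hBcond := momentMap_zero_cond p c a B hBker
    have hmain := (kp_main hc a ha B hB0
      (fun x => ∑ j, B j * maternKernel p c x (a j)) (fun x => rfl)).mpr hBcond
    exact ⟨B, hB0, hBcond, hmain.1, hmain.2⟩
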